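/- Let X ∈ ℝ^{d×N}, T ⊆ [N], and suppose the Hausdorff distance between conv(X_T) and conv(X) is at most opt(X)·ε, where X_T is the submatrix of columns indexed by T and conv(X_T) ⊆ conv(X). Then min over column stochastic A ∈ ℝ^{|T|×k}, B ∈ ℝ^{k×N} of (1/√N)‖X − X_T A B‖_F is at most (1+ε)·opt(X). -/

import Mathlib

open Matrix Metric

def ColStoch {m n : Type*} [Fintype m] [Fintype n] (M : Matrix m n ℝ) : Prop :=
  (∀ i j, 0 ≤ M i j) ∧ ∀ j, ∑ i, M i j = 1

noncomputable def frob {m n : Type*} [Fintype m] [Fintype n] (M : Matrix m n ℝ) : ℝ :=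
  Real.sqrt (∑ i, ∑ j, (M i j) ^ 2)

noncomputable def opt {d N : ℕ} (k : ℕ) (X : Matrix (Fin d) (Fin N) ℝ) : ℝ :=
  sInf {c | ∃ A : Matrix (Fin N) (Fin k) ℝ, ∃ B : Matrix (Fin k) (Fin N) ℝ,
    ColStoch A ∧ ColStoch B ∧ c = (1 / Real.sqrt N) * frob (X - X * A * B)}

/-- The columns of a matrix, as points of Euclidean space. -/
def cols {d : ℕ} {n : Type*} [Fintype n] (M : Matrix (Fin d) n ℝ) :
    Set (EuclideanSpace ℝ (Fin d)) :=
  Set.range fun j => (WithLp.toLp 2 (fun a => M a j) : EuclideanSpace ℝ (Fin d))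

/-! ### Auxiliary material -/

/-- A column of a matrix as a point of Euclidean space. -/
noncomputable def colE {d : ℕ} {n : Type*} (M : Matrix (Fin d) n ℝ) (j : n) :
    EuclideanSpace ℝ (Fin d) := WithLp.toLp 2 (fun a => M a j)

lemma sum_smul_apply {d : ℕ} {n : Type*} (s : Finset n) (w : n → ℝ)
    (f : n → EuclideanSpace ℝ (Fin d)) (a : Fin d) :
    (∑ i ∈ s, w i • f i) a = ∑ i ∈ s, w i * f i a := by
  classical
  induction s using Finset.induction with
  | empty => rfl
  | insert x s h ih => simp [Finset.sum_insert h, PiLp.add_apply, PiLp.smul_apply, ih, smul_eq_mul]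

lemma frob_nonneg {m n : Type*} [Fintype m] [Fintype n] (M : Matrix m n ℝ) :
    0 ≤ frob M := Real.sqrt_nonneg _

/-- The matrix as a point of Euclidean space over the product index. -/
noncomputable def toE {m n : Type*} [Fintype m] [Fintype n] (M : Matrix m n ℝ) :
    EuclideanSpace ℝ (m × n) := WithLp.toLp 2 (fun p : m × n => M p.1 p.2)

lemma frob_eq_toE {m n : Type*} [Fintype m] [Fintype n] (M : Matrix m n ℝ) :
    frob M = ‖toE M‖ := by
  rw [frob, EuclideanSpace.norm_eq]
  congr 1
  rw [Fintype.sum_prod_type]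
  simp [toE, Real.norm_eq_abs, sq_abs]

lemma frob_sub_le {m n : Type*} [Fintype m] [Fintype n] (P Q R : Matrix m n ℝ) :
    frob (P - R) ≤ frob (P - Q) + frob (Q - R) := by
  have h : toE (P - R) = toE (P - Q) + toE (Q - R) := by
    ext p
    simp only [toE, PiLp.add_apply, PiLp.toLp_apply, Matrix.sub_apply]
    ring
  rw [frob_eq_toE, frob_eq_toE, frob_eq_toE, h]
  exact norm_add_le _ _

lemma frob_eq_cols {d : ℕ} {n : Type*} [Fintype n] (M : Matrix (Fin d) n ℝ) :
    frob M = Real.sqrt (∑ j, ‖colE M j‖ ^ 2) := by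
  rw [frob, Finset.sum_comm]
  congr 1
  refine Finset.sum_congr rfl fun j _ => ?_
  rw [EuclideanSpace.norm_eq, Real.sq_sqrt (by positivity)]
  simp [colE, Real.norm_eq_abs, sq_abs]

lemma frob_le_of_cols {d : ℕ} {n : Type*} [Fintype n] (M : Matrix (Fin d) n ℝ) (c : ℝ)
    (hc : 0 ≤ c) (h : ∀ j, ‖colE M j‖ ≤ c) :
    frob M ≤ Real.sqrt (Fintype.card n) * c := by
  rw [frob_eq_cols]
  calc Real.sqrt (∑ j, ‖colE M j‖ ^ 2)
      ≤ Real.sqrt (∑ _j : n, c ^ 2) := by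
        apply Real.sqrt_le_sqrt
        exact Finset.sum_le_sum fun j _ => pow_le_pow_left₀ (norm_nonneg _) (h j) 2
    _ = Real.sqrt (Fintype.card n) * c := by
        rw [Finset.sum_const, Finset.card_univ, nsmul_eq_mul, Real.sqrt_mul (by positivity),
          Real.sqrt_sq hc]

/-- If the convex hull of the columns indexed by `T` is within Hausdorff distance
`opt(X)·ε` of the convex hull of all columns, then archetypal analysis restricted to
`X_T` is a `(1+ε)`-approximation in objective value. -/
theorem aa_approx_hull {d N k : ℕ} (ε : ℝ) (hε : 0 < ε)
    (X : Matrix (Fin d) (Fin N) ℝ) (T : Finset (Fin N)) (hT : T.Nonempty)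
    (XT : Matrix (Fin d) {i // i ∈ T} ℝ) (hXT : ∀ a (i : {i // i ∈ T}), XT a i = X a i.1)
    (hopt : ∃ A : Matrix (Fin N) (Fin k) ℝ, ∃ B : Matrix (Fin k) (Fin N) ℝ,
      ColStoch A ∧ ColStoch B ∧ (1 / Real.sqrt N) * frob (X - X * A * B) = opt k X)
    (hH : hausdorffDist (convexHull ℝ (cols XT)) (convexHull ℝ (cols X)) ≤ opt k X * ε) :
    sInf {c | ∃ A : Matrix {i // i ∈ T} (Fin k) ℝ, ∃ B : Matrix (Fin k) (Fin N) ℝ,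
        ColStoch A ∧ ColStoch B ∧ c = (1 / Real.sqrt N) * frob (X - XT * A * B)}
      ≤ (1 + ε) * opt k X := by
  obtain ⟨A, B, hA, hB, hval⟩ := hopt
  obtain ⟨t0, ht0⟩ := hT
  have hTn : Nonempty {i // i ∈ T} := ⟨⟨t0, ht0⟩⟩
  have hNn : Nonempty (Fin N) := ⟨t0⟩
  have hNpos : (0 : ℝ) < Real.sqrt N := by
    have : 0 < N := t0.pos
    have : (0 : ℝ) < N := by exact_mod_cast this
    positivity
  have hopt0 : 0 ≤ opt k X := by
    rw [← hval]
    exact mul_nonneg (by positivity) (frob_nonneg _)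
  set c : ℝ := opt k X * ε with hc
  have hc0 : 0 ≤ c := mul_nonneg hopt0 hε.le
  -- nonemptiness / compactness facts
  have hXTne : (convexHull ℝ (cols XT)).Nonempty :=
    (Set.range_nonempty _).mono (subset_convexHull ℝ _)
  have hXne : (convexHull ℝ (cols X)).Nonempty :=
    (Set.range_nonempty _).mono (subset_convexHull ℝ _)
  have hcompact : IsCompact (convexHull ℝ (cols XT)) :=
    (Set.finite_range _).isCompact_convexHull (𝕜 := ℝ)
  have hfin : EMetric.hausdorffEdist (convexHull ℝ (cols X)) (convexHull ℝ (cols XT)) ≠ ⊤ :=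
    hausdorffEdist_ne_top_of_nonempty_of_bounded hXne hXTne
      ((Set.finite_range _).isCompact_convexHull (𝕜 := ℝ)).isBounded hcompact.isBounded
  -- columns of X*A lie in the hull of columns of X
  have hy : ∀ j : Fin k, colE (X * A) j ∈ convexHull ℝ (cols X) := by
    intro j
    refine mem_convexHull_of_exists_fintype (fun i => A i j) (fun i => colE X i)
      (fun i => hA.1 i j) (hA.2 j) (fun i => ⟨i, rfl⟩) ?_
    ext a
    rw [sum_smul_apply]
    simp [colE, Matrix.mul_apply, mul_comm]
  -- for each archetype column pick a nearby point in the hull of XT-columns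
  have key : ∀ j : Fin k, ∃ z ∈ convexHull ℝ (cols XT), dist (colE (X * A) j) z ≤ c := by
    intro j
    obtain ⟨z, hz, hdz⟩ := hcompact.exists_infDist_eq_dist hXTne (colE (X * A) j)
    refine ⟨z, hz, ?_⟩
    rw [← hdz]
    calc infDist (colE (X * A) j) (convexHull ℝ (cols XT))
        ≤ hausdorffDist (convexHull ℝ (cols X)) (convexHull ℝ (cols XT)) :=
          infDist_le_hausdorffDist_of_mem (hy j) hfin
      _ = hausdorffDist (convexHull ℝ (cols XT)) (convexHull ℝ (cols X)) :=
          hausdorffDist_comm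
      _ ≤ c := hH
  choose z hzmem hzdist using key
  -- express each z j as a stochastic combination of columns of XT
  have hwex : ∀ j : Fin k, ∃ w : {i // i ∈ T} → ℝ,
      (∀ i, 0 ≤ w i) ∧ (∑ i, w i) = 1 ∧ (∑ i, w i • colE XT i) = z j := by
    intro j
    have hz := hzmem j
    rw [cols, convexHull_range_eq_exists_affineCombination] at hz
    obtain ⟨s, wt, hw₀, hw₁, hws⟩ := hz
    refine ⟨fun i => if i ∈ s then wt i else 0, ?_, ?_, ?_⟩
    · intro i
      dsimp only
      split_ifs with h
      · exact hw₀ i h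
      · exact le_refl 0
    · rw [Finset.sum_ite_mem, Finset.univ_inter, hw₁]
    · rw [← hws, Finset.affineCombination_eq_linear_combination _ _ _ hw₁]
      rw [show (∑ i : {i // i ∈ T}, (if i ∈ s then wt i else 0) • colE XT i)
          = ∑ i : {i // i ∈ T}, (if i ∈ s then wt i • colE XT i else 0) from
        Finset.sum_congr rfl fun i _ => by split_ifs <;> simp]
      rw [Finset.sum_ite_mem, Finset.univ_inter]
      rfl
  choose w hw₀ hw₁ hwz using hwex
  set A' : Matrix {i // i ∈ T} (Fin k) ℝ := Matrix.of fun i j => w j i with hA'def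
  have hA' : ColStoch A' := ⟨fun i j => hw₀ j i, fun j => hw₁ j⟩
  -- the columns of XT * A' are the z j
  have hcolz : ∀ j : Fin k, colE (XT * A') j = z j := by
    intro j
    rw [← hwz j]
    ext a
    rw [sum_smul_apply]
    simp [colE, Matrix.mul_apply, A', mul_comm]
  -- bound each column of the difference
  have hcol : ∀ m : Fin N, ‖colE (X * A * B - XT * A' * B) m‖ ≤ c := by
    intro m
    have h1 : colE (X * A * B - XT * A' * B) m
        = ∑ j, B j m • (colE (X * A) j - colE (XT * A') j) := by
      ext a
      rw [sum_smul_apply]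
      simp only [colE, Matrix.sub_apply, Matrix.mul_apply, PiLp.sub_apply, mul_sub,
        Finset.sum_sub_distrib]
      congr 1 <;> exact Finset.sum_congr rfl fun j _ => by ring
    rw [h1]
    calc ‖∑ j, B j m • (colE (X * A) j - colE (XT * A') j)‖
        ≤ ∑ j, ‖B j m • (colE (X * A) j - colE (XT * A') j)‖ := norm_sum_le _ _
      _ = ∑ j, B j m * ‖colE (X * A) j - colE (XT * A') j‖ := by
          refine Finset.sum_congr rfl fun j _ => ?_
          rw [norm_smul, Real.norm_eq_abs, abs_of_nonneg (hB.1 j m)]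
      _ ≤ ∑ j, B j m * c := by
          refine Finset.sum_le_sum fun j _ => mul_le_mul_of_nonneg_left ?_ (hB.1 j m)
          rw [hcolz j, ← dist_eq_norm]
          exact hzdist j
      _ = c := by rw [← Finset.sum_mul, hB.2 m, one_mul]
  have hfb : frob (X * A * B - XT * A' * B) ≤ Real.sqrt N * c := by
    have := frob_le_of_cols (X * A * B - XT * A' * B) c hc0 hcol
    simpa [Fintype.card_fin] using this
  have htri : frob (X - XT * A' * B)
      ≤ frob (X - X * A * B) + frob (X * A * B - XT * A' * B) := frob_sub_le _ _ _
  -- conclude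
  have hbdd : BddBelow {c | ∃ A : Matrix {i // i ∈ T} (Fin k) ℝ,
      ∃ B : Matrix (Fin k) (Fin N) ℝ,
      ColStoch A ∧ ColStoch B ∧ c = (1 / Real.sqrt N) * frob (X - XT * A * B)} := by
    refine ⟨0, fun x hx => ?_⟩
    obtain ⟨A'', B'', _, _, rfl⟩ := hx
    exact mul_nonneg (by positivity) (frob_nonneg _)
  have hmem : (1 / Real.sqrt N) * frob (X - XT * A' * B) ∈ {c | ∃ A : Matrix {i // i ∈ T} (Fin k) ℝ,
      ∃ B : Matrix (Fin k) (Fin N) ℝ,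
      ColStoch A ∧ ColStoch B ∧ c = (1 / Real.sqrt N) * frob (X - XT * A * B)} :=
    ⟨A', B, hA', hB, rfl⟩
  refine le_trans (csInf_le hbdd hmem) ?_
  have hstep : (1 / Real.sqrt N) * frob (X - XT * A' * B)
      ≤ (1 / Real.sqrt N) * (frob (X - X * A * B) + Real.sqrt N * c) := by
    refine mul_le_mul_of_nonneg_left ?_ (by positivity)
    exact htri.trans (add_le_add_right hfb _)
  refine hstep.trans ?_
  rw [mul_add, hval]
  have : (1 / Real.sqrt N) * (Real.sqrt N * c) = c := by
    field_simp
  rw [this, hc]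
  linarith
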